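/- Let (X,𝓔) and (Y,𝓔') be uniformly locally finite coarse spaces and let λ be an infinite cardinal. If X coarsely embeds into Y and 𝓔' is generated by a set of size λ, then 𝓔 is generated by a set of size at most λ. -/
import Mathlib


open ContinuousLinearMap

/-- A coarse structure on `X`: a collection of subsets of `X × X` containing the diagonal
and closed under subsets, finite unions, inverses, and composition. -/
structure CoarseStructure (X : Type*) where
  sets : Set (Set (X × X))
  diagonal_mem : {p : X × X | p.1 = p.2} ∈ sets
  subset_mem : ∀ E ∈ sets, ∀ F ⊆ E, F ∈ sets
  union_mem : ∀ E ∈ sets, ∀ F ∈ sets, E ∪ F ∈ sets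
  inv_mem : ∀ E ∈ sets, {p : X × X | (p.2, p.1) ∈ E} ∈ sets
  comp_mem : ∀ E ∈ sets, ∀ F ∈ sets,
    {p : X × X | ∃ y, (p.1, y) ∈ E ∧ (y, p.2) ∈ F} ∈ sets

/-- A coarse structure is uniformly locally finite if each entourage has uniformly
finite sections. -/
def CoarseStructure.ULF {X : Type*} (𝓔 : CoarseStructure X) : Prop :=
  ∀ E ∈ 𝓔.sets, ∃ k : ℕ, ∀ x : X,
    Set.Finite {y | (x, y) ∈ E} ∧ Nat.card {y | (x, y) ∈ E} ≤ k


universe u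

namespace CoarseAux

variable {Y : Type u}

/-- Composition of relations. -/
def cRel (E F : Set (Y × Y)) : Set (Y × Y) :=
  {p : Y × Y | ∃ y, (p.1, y) ∈ E ∧ (y, p.2) ∈ F}

/-- Inverse of a relation. -/
def invRel (E : Set (Y × Y)) : Set (Y × Y) := {p : Y × Y | (p.2, p.1) ∈ E}

/-- The diagonal. -/
def diagRel (Y : Type u) : Set (Y × Y) := {p : Y × Y | p.1 = p.2}

lemma invRel_cRel (E F : Set (Y × Y)) :
    invRel (cRel E F) = cRel (invRel F) (invRel E) := by
  ext p
  constructor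
  · rintro ⟨y, h1, h2⟩; exact ⟨y, h2, h1⟩
  · rintro ⟨y, h1, h2⟩; exact ⟨y, h2, h1⟩

lemma invRel_union (E F : Set (Y × Y)) : invRel (E ∪ F) = invRel E ∪ invRel F := rfl

lemma invRel_invRel (E : Set (Y × Y)) : invRel (invRel E) = E := rfl

lemma invRel_diagRel : invRel (diagRel Y) = diagRel Y := by
  ext p; exact eq_comm

/-- Iterated closure of a family under composition, starting from symmetrized
generators containing the diagonal. -/
def gens (F : Set (Set (Y × Y))) : ℕ → Set (Set (Y × Y))
  | 0 => insert (diagRel Y) ((fun e => e ∪ diagRel Y ∪ invRel e) '' F)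
  | (n + 1) => gens F n ∪
      (fun p : Set (Y × Y) × Set (Y × Y) => cRel p.1 p.2) '' (gens F n ×ˢ gens F n)

lemma gens_mono (F : Set (Set (Y × Y))) : Monotone (gens F) := by
  apply monotone_nat_of_le_succ
  intro n
  exact Set.subset_union_left

lemma diag_subset_of_mem_gens {F : Set (Set (Y × Y))} :
    ∀ n, ∀ D ∈ gens F n, diagRel Y ⊆ D := by
  intro n
  induction n with
  | zero =>
    rintro D (rfl | ⟨e, _, rfl⟩)
    · exact subset_rfl
    · intro p hp; exact Or.inl (Or.inr hp)
  | succ n ih =>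
    rintro D (hD | ⟨⟨A, B⟩, ⟨hA, hB⟩, rfl⟩)
    · exact ih D hD
    · rintro ⟨x, y⟩ (h : x = y)
      exact ⟨x, ih A hA rfl, by simpa [h] using ih B hB (rfl : ((x : Y), x) ∈ diagRel Y)⟩

lemma invRel_mem_gens {F : Set (Set (Y × Y))} :
    ∀ n, ∀ D ∈ gens F n, invRel D ∈ gens F n := by
  intro n
  induction n with
  | zero =>
    rintro D (rfl | ⟨e, he, rfl⟩)
    · rw [invRel_diagRel]; exact Or.inl rfl
    · refine Or.inr ⟨e, he, ?_⟩
      rw [invRel_union, invRel_union, invRel_diagRel, invRel_invRel]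
      ext p
      constructor
      · rintro ((h | h) | h)
        · exact Or.inr h
        · exact Or.inl (Or.inr h)
        · exact Or.inl (Or.inl h)
      · rintro ((h | h) | h)
        · exact Or.inr h
        · exact Or.inl (Or.inr h)
        · exact Or.inl (Or.inl h)
  | succ n ih =>
    rintro D (hD | ⟨⟨A, B⟩, ⟨hA, hB⟩, rfl⟩)
    · exact Or.inl (ih D hD)
    · refine Or.inr ⟨(invRel B, invRel A), ⟨ih B hB, ih A hA⟩, ?_⟩
      exact (invRel_cRel A B).symm

lemma gens_mem_sets {F : Set (Set (Y × Y))} (𝓔' : CoarseStructure Y) (hF : F ⊆ 𝓔'.sets) :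
    ∀ n, ∀ D ∈ gens F n, D ∈ 𝓔'.sets := by
  intro n
  induction n with
  | zero =>
    rintro D (rfl | ⟨e, he, rfl⟩)
    · exact 𝓔'.diagonal_mem
    · exact 𝓔'.union_mem _ (𝓔'.union_mem _ (hF he) _ 𝓔'.diagonal_mem) _
        (𝓔'.inv_mem _ (hF he))
  | succ n ih =>
    rintro D (hD | ⟨⟨A, B⟩, ⟨hA, hB⟩, rfl⟩)
    · exact ih D hD
    · exact 𝓔'.comp_mem _ (ih A hA) _ (ih B hB)

lemma cRel_mem_gens {F : Set (Set (Y × Y))} {n m : ℕ} {A B : Set (Y × Y)}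
    (hA : A ∈ gens F n) (hB : B ∈ gens F m) :
    cRel A B ∈ gens F (max n m + 1) :=
  Or.inr ⟨(A, B), ⟨gens_mono F (le_max_left n m) hA, gens_mono F (le_max_right n m) hB⟩, rfl⟩

lemma mk_gens_le {F : Set (Set (Y × Y))} {lam : Cardinal}
    (hlam : Cardinal.aleph0 ≤ lam) (hF : Cardinal.mk F ≤ lam) :
    ∀ n, Cardinal.mk (gens F n) ≤ lam := by
  intro n
  induction n with
  | zero =>
    calc Cardinal.mk (gens F 0)
        ≤ Cardinal.mk ((fun e => e ∪ diagRel Y ∪ invRel e) '' F) + 1 :=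
          Cardinal.mk_insert_le
      _ ≤ lam + 1 := by
          gcongr
          exact Cardinal.mk_image_le.trans hF
      _ ≤ lam + lam := by gcongr; exact Cardinal.one_le_aleph0.trans hlam
      _ = lam := Cardinal.add_eq_self hlam
  | succ n ih =>
    calc Cardinal.mk (gens F (n + 1))
        ≤ Cardinal.mk (gens F n) +
            Cardinal.mk ((fun p : Set (Y × Y) × Set (Y × Y) =>
              cRel p.1 p.2) '' (gens F n ×ˢ gens F n)) := Cardinal.mk_union_le _ _
      _ ≤ lam + Cardinal.mk (gens F n ×ˢ gens F n) :=
          add_le_add ih Cardinal.mk_image_le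
      _ = lam + Cardinal.mk (gens F n) * Cardinal.mk (gens F n) := by
          rw [Cardinal.mk_setProd]
      _ ≤ lam + lam * lam := by gcongr
      _ = lam + lam := by rw [Cardinal.mul_eq_self hlam]
      _ = lam := Cardinal.add_eq_self hlam

end CoarseAux

open CoarseAux in
/-- If `X` coarsely embeds into `Y` (via a coarse and expanding map `f`) and the u.l.f.
coarse structure `𝓔'` on `Y` is generated by a set of infinite cardinality `λ`, then the
u.l.f. coarse structure `𝓔` on `X` is generated by a set of cardinality at most `λ`. -/
theorem generated_le_of_coarse_embedding {X Y : Type u}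
    (𝓔 : CoarseStructure X) (𝓔' : CoarseStructure Y)
    (hX : 𝓔.ULF) (hY : 𝓔'.ULF)
    (lam : Cardinal) (hlam : Cardinal.aleph0 ≤ lam)
    (f : X → Y)
    (hcoarse : ∀ E ∈ 𝓔.sets,
      {p : Y × Y | ∃ q ∈ E, p = (f q.1, f q.2)} ∈ 𝓔'.sets)
    (hexpanding : ∀ E ∈ 𝓔'.sets, {q : X × X | (f q.1, f q.2) ∈ E} ∈ 𝓔.sets)
    (hgen : ∃ F : Set (Set (Y × Y)), Cardinal.mk F = lam ∧ F ⊆ 𝓔'.sets ∧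
      ∀ 𝓖 : CoarseStructure Y, F ⊆ 𝓖.sets → 𝓔'.sets ⊆ 𝓖.sets) :
    ∃ G : Set (Set (X × X)), Cardinal.mk G ≤ lam ∧ G ⊆ 𝓔.sets ∧
      ∀ 𝓖 : CoarseStructure X, G ⊆ 𝓖.sets → 𝓔.sets ⊆ 𝓖.sets := by
  obtain ⟨F, hFcard, hFsub, hFgen⟩ := hgen
  -- The "dominating family" in 𝓔'
  set 𝓓 : Set (Set (Y × Y)) := ⋃ n : ULift.{u} ℕ, gens F n.down with h𝓓
  have h𝓓sub : 𝓓 ⊆ 𝓔'.sets := by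
    rintro D hD
    obtain ⟨n, hn⟩ := Set.mem_iUnion.1 hD
    exact gens_mem_sets 𝓔' hFsub _ D hn
  -- 𝓓 has cardinality at most lam
  have h𝓓card : Cardinal.mk 𝓓 ≤ lam := by
    refine (Cardinal.mk_iUnion_le _).trans ?_
    have h1 : Cardinal.mk (ULift.{u} ℕ) ≤ lam := by
      simpa using hlam
    have h2 : (⨆ n : ULift.{u} ℕ, Cardinal.mk (gens F n.down)) ≤ lam :=
      ciSup_le' fun n => mk_gens_le hlam hFcard.le n.down
    calc Cardinal.mk (ULift.{u} ℕ) * (⨆ n : ULift.{u} ℕ, Cardinal.mk (gens F n.down))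
        ≤ lam * lam := by gcongr
      _ = lam := Cardinal.mul_eq_self hlam
  -- The coarse structure of sets dominated by 𝓓
  have hdom : ∀ E' ∈ 𝓔'.sets, ∃ D ∈ 𝓓, E' ⊆ D := by
    set 𝓒 : CoarseStructure Y :=
      { sets := {E : Set (Y × Y) | ∃ D ∈ 𝓓, E ⊆ D}
        diagonal_mem := ⟨diagRel Y, Set.mem_iUnion.2 ⟨⟨0⟩, Or.inl rfl⟩, subset_rfl⟩
        subset_mem := by
          rintro E ⟨D, hD, hED⟩ F' hFE
          exact ⟨D, hD, hFE.trans hED⟩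
        union_mem := by
          rintro E ⟨D1, hD1, hE1⟩ E' ⟨D2, hD2, hE2⟩
          obtain ⟨n, hn⟩ := Set.mem_iUnion.1 hD1
          obtain ⟨m, hm⟩ := Set.mem_iUnion.1 hD2
          refine ⟨cRel D1 D2,
            Set.mem_iUnion.2 ⟨⟨max n.down m.down + 1⟩, cRel_mem_gens hn hm⟩, ?_⟩
          rintro ⟨x, y⟩ (hx | hx)
          · exact ⟨y, hE1 hx, diag_subset_of_mem_gens _ _ hm rfl⟩
          · exact ⟨x, diag_subset_of_mem_gens _ _ hn rfl, hE2 hx⟩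
        inv_mem := by
          rintro E ⟨D, hD, hED⟩
          obtain ⟨n, hn⟩ := Set.mem_iUnion.1 hD
          refine ⟨invRel D, Set.mem_iUnion.2 ⟨n, invRel_mem_gens _ _ hn⟩, ?_⟩
          intro p hp
          exact hED hp
        comp_mem := by
          rintro E ⟨D1, hD1, hE1⟩ E' ⟨D2, hD2, hE2⟩
          obtain ⟨n, hn⟩ := Set.mem_iUnion.1 hD1
          obtain ⟨m, hm⟩ := Set.mem_iUnion.1 hD2
          refine ⟨cRel D1 D2,
            Set.mem_iUnion.2 ⟨⟨max n.down m.down + 1⟩, cRel_mem_gens hn hm⟩, ?_⟩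
          rintro p ⟨y, h1, h2⟩
          exact ⟨y, hE1 h1, hE2 h2⟩ }
    have hF𝓒 : F ⊆ 𝓒.sets := by
      intro e he
      exact ⟨e ∪ diagRel Y ∪ invRel e,
        Set.mem_iUnion.2 ⟨⟨0⟩, Or.inr ⟨e, he, rfl⟩⟩,
        fun p hp => Or.inl (Or.inl hp)⟩
    exact fun E' hE' => hFgen 𝓒 hF𝓒 hE'
  -- The generating set for 𝓔
  refine ⟨(fun D => {q : X × X | (f q.1, f q.2) ∈ D}) '' 𝓓,
    Cardinal.mk_image_le.trans h𝓓card, ?_, ?_⟩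
  · rintro _ ⟨D, hD, rfl⟩
    exact hexpanding D (h𝓓sub hD)
  · intro 𝓖 hG E hE
    obtain ⟨D, hD, hED⟩ := hdom _ (hcoarse E hE)
    refine 𝓖.subset_mem _ (hG ⟨D, hD, rfl⟩) E ?_
    intro q hq
    exact hED ⟨q, hq, rfl⟩
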